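/- arXiv:1306.0131 — 2 statements merged into one kernel-verified Lean document; each statement's English description precedes it below -/
import Mathlib

section
/- Let f be a monic polynomial with integer coefficients such that f(0) ≠ 0 and every complex root of f has absolute value at most 1. Then every complex root of f is a root of unity. -/
open Polynomial IntermediateField
open scoped NNReal

/-- Kronecker's lemma: if `f` is a monic integer polynomial with `f(0) ≠ 0` all of
whose complex roots have absolute value at most `1`, then every complex root of `f`
is a root of unity. -/
theorem kronecker_lemma (f : Polynomial ℤ) (hf : f.Monic) (h0 : f.eval 0 ≠ 0)
    (hroots : ∀ z : ℂ, Polynomial.aeval z f = 0 → ‖z‖ ≤ 1) :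
    ∀ z : ℂ, Polynomial.aeval z f = 0 → ∃ n : ℕ, 0 < n ∧ z ^ n = 1 := by
  intro z hz
  classical
  have hz_int : IsIntegral ℤ z := ⟨f, hf, hz⟩
  set p : Polynomial ℤ := minpoly ℤ z with hp
  have hpm : p.Monic := minpoly.monic hz_int
  have hpd : p ∣ f := minpoly.isIntegrallyClosed_dvd hz_int hz
  have hc0 : p.coeff 0 ≠ 0 := by
    intro h
    obtain ⟨q, hq⟩ := hpd
    apply h0
    rw [hq, eval_mul, ← coeff_zero_eq_eval_zero, h, zero_mul]
  -- the complex roots of `p`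
  set P : Polynomial ℂ := p.map (algebraMap ℤ ℂ) with hP
  have hPm : P.Monic := hpm.map _
  have hPne : P ≠ 0 := hPm.ne_zero
  set R : Multiset ℂ := P.roots with hR
  have hPeq : P = (R.map fun a => X - C a).prod :=
    (IsAlgClosed.splits P).eq_prod_roots_of_monic hPm
  -- each root of `p` is a root of `f`, hence has norm at most 1
  have hrle : ∀ r ∈ R, ‖r‖₊ ≤ 1 := by
    intro r hr
    have hr' : Polynomial.aeval r p = 0 := by
      have := (mem_roots hPne).1 hr
      rwa [IsRoot.def, hP, eval_map, ← aeval_def] at this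
    have : Polynomial.aeval r f = 0 := by
      obtain ⟨q, hq⟩ := hpd
      rw [hq, map_mul, hr', zero_mul]
    have := hroots r this
    simpa [← NNReal.coe_le_coe, coe_nnnorm] using this
  -- the product of the norms of the roots equals `|p.coeff 0| ≥ 1`
  have hprod : (R.map fun a => ‖a‖₊).prod = ‖(p.coeff 0 : ℂ)‖₊ := by
    have h1 : P.eval 0 = (R.map fun a => -a).prod := by
      rw [hPeq, eval_multiset_prod, Multiset.map_map]
      congr 1
      ext a
      simp
    have h2 : P.eval 0 = (p.coeff 0 : ℂ) := by
      rw [hP, eval_map, eval₂_at_zero]; rfl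
    have := congrArg (fun w : ℂ => ‖w‖₊) h1
    simp only [h2] at this
    rw [this, show ‖(Multiset.map (fun a => -a) R).prod‖₊
        = ((Multiset.map (fun a => -a) R).map fun a => ‖a‖₊).prod from
      map_multiset_prod nnnormHom _, Multiset.map_map]
    simp [Function.comp]
  have hone : (1 : ℝ≥0) ≤ ‖(p.coeff 0 : ℂ)‖₊ := by
    rw [← NNReal.coe_le_coe, coe_nnnorm]
    simp only [Complex.norm_intCast, NNReal.coe_one]
    exact_mod_cast Int.one_le_abs hc0
  -- hence every root of `p` has norm exactly 1
  have hreq : ∀ r ∈ R, ‖r‖₊ = 1 := by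
    intro r hr
    refine le_antisymm (hrle r hr) ?_
    have herase : ((R.erase r).map fun a => ‖a‖₊).prod ≤ 1 := by
      have := Multiset.prod_le_pow_card ((R.erase r).map fun a => ‖a‖₊) 1 ?_
      · simpa using this
      · intro x hx
        obtain ⟨a, ha, rfl⟩ := Multiset.mem_map.1 hx
        exact hrle a (Multiset.mem_of_mem_erase ha)
    have := Multiset.prod_map_erase (f := fun a => ‖a‖₊) hr
    calc (1 : ℝ≥0) ≤ ‖(p.coeff 0 : ℂ)‖₊ := hone
      _ = (R.map fun a => ‖a‖₊).prod := hprod.symm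
      _ = ‖r‖₊ * ((R.erase r).map fun a => ‖a‖₊).prod := this.symm
      _ ≤ ‖r‖₊ * 1 := mul_le_mul_right herase _
      _ = ‖r‖₊ := mul_one _
  -- work in the number field `ℚ(z)`
  have hzq : IsIntegral ℚ z := hz_int.tower_top
  set K : IntermediateField ℚ ℂ := ℚ⟮z⟯ with hK
  haveI : FiniteDimensional ℚ K := IntermediateField.adjoin.finiteDimensional hzq
  haveI : NumberField K := ⟨⟩
  set x : K := IntermediateField.AdjoinSimple.gen ℚ z with hx
  have hxz : (algebraMap K ℂ) x = z := rfl
  have hxi : IsIntegral ℤ x := by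
    rwa [← isIntegral_algebraMap_iff (algebraMap K ℂ).injective, hxz]
  have hnorm : ∀ φ : K →+* ℂ, ‖φ x‖ = 1 := by
    intro φ
    have hmin : minpoly ℚ x = minpoly ℚ z := by
      rw [← hxz]; exact (minpoly.algebraMap_eq (A := ℚ) (algebraMap K ℂ).injective x).symm
    have haev : Polynomial.aeval (φ x) (minpoly ℚ x) = 0 := by
      have h := Polynomial.aeval_algHom_apply φ.toRatAlgHom x (minpoly ℚ x)
      rw [minpoly.aeval, map_zero] at h
      exact h
    have hminq : minpoly ℚ z = p.map (algebraMap ℤ ℚ) :=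
      minpoly.isIntegrallyClosed_eq_field_fractions' ℚ hz_int
    rw [hmin, hminq, aeval_map_algebraMap] at haev
    have hmem : φ x ∈ R := by
      rw [hR, mem_roots hPne, IsRoot.def, hP, eval_map, ← aeval_def]
      exact haev
    have := hreq (φ x) hmem
    rw [← NNReal.coe_eq_one] at this
    simpa [coe_nnnorm] using this
  obtain ⟨n, hn, hxn⟩ := NumberField.Embeddings.pow_eq_one_of_norm_eq_one K ℂ hxi hnorm
  refine ⟨n, hn, ?_⟩
  have := congrArg (algebraMap K ℂ) hxn
  rwa [map_pow, map_one, hxz] at this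
end

section
/- Let a > b ≥ 1 be coprime integers and let n > 6. Then there exists a prime p that divides a^n − b^n but does not divide a^k − b^k for any k with 1 ≤ k < n. -/
open Polynomial Finset

/-- Homogenized cyclotomic polynomial value: `b^φ(n) * Φₙ(a/b)` as an integer. -/
noncomputable def zsigPhi (n : ℕ) (a b : ℤ) : ℤ :=
  ∑ i ∈ Finset.range (n.totient + 1), (cyclotomic n ℤ).coeff i * a ^ i * b ^ (n.totient - i)

lemma zsigPhi_cast {K : Type*} [Field K] (n : ℕ) (a b : ℤ) (hb : (b : K) ≠ 0) :
    ((zsigPhi n a b : ℤ) : K) = (b : K) ^ n.totient * (cyclotomic n K).eval ((a : K) / (b : K)) := by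
  rw [eval_eq_sum_range, natDegree_cyclotomic, zsigPhi]
  push_cast
  rw [Finset.mul_sum]
  refine Finset.sum_congr rfl fun i hi => ?_
  rw [Finset.mem_range, Nat.lt_succ_iff] at hi
  have hc : (cyclotomic n K).coeff i = ((cyclotomic n ℤ).coeff i : K) := by
    rw [← map_cyclotomic_int n K, coeff_map, eq_intCast]
  have hbt : (b:K) ^ (n.totient - i) * (b:K) ^ i = (b:K) ^ n.totient := by
    rw [← pow_add, Nat.sub_add_cancel hi]
  rw [hc, div_pow]
  field_simp
  rw [← hbt]
  ring

section
variable {a b : ℤ} (hb : 1 ≤ b) (hba : b < a)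

lemma zsigPhi_bR (hb : 1 ≤ b) (hba : b < a) :
    (1:ℝ) ≤ (b:ℝ) ∧ (0:ℝ) < b ∧ ((b:ℝ) ≠ 0) ∧ (1:ℝ) < (a:ℝ)/(b:ℝ) := by
  have h1 : (1:ℝ) ≤ (b:ℝ) := by exact_mod_cast hb
  have h0 : (0:ℝ) < b := by linarith
  have hba' : (b:ℝ) < a := by exact_mod_cast hba
  exact ⟨h1, h0, ne_of_gt h0, (one_lt_div h0).mpr hba'⟩

include hb hba

lemma zsigPhi_prod {n : ℕ} (hn : 0 < n) :
    ∏ d ∈ n.divisors, zsigPhi d a b = a ^ n - b ^ n := by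
  obtain ⟨h1, h0, hne, hq⟩ := zsigPhi_bR hb hba
  have key : ((∏ d ∈ n.divisors, zsigPhi d a b : ℤ) : ℝ) = ((a ^ n - b ^ n : ℤ) : ℝ) := by
    rw [Int.cast_prod]
    calc ∏ d ∈ n.divisors, ((zsigPhi d a b : ℤ) : ℝ)
        = ∏ d ∈ n.divisors, ((b:ℝ) ^ d.totient * (cyclotomic d ℝ).eval ((a:ℝ)/(b:ℝ))) :=
          Finset.prod_congr rfl fun d _ => zsigPhi_cast d a b hne
      _ = (b:ℝ) ^ (∑ d ∈ n.divisors, d.totient) *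
            (∏ d ∈ n.divisors, (cyclotomic d ℝ).eval ((a:ℝ)/(b:ℝ))) := by
          rw [Finset.prod_mul_distrib, Finset.prod_pow_eq_pow_sum]
      _ = (b:ℝ) ^ n * (((a:ℝ)/(b:ℝ)) ^ n - 1) := by
          rw [Nat.sum_totient, ← eval_prod, prod_cyclotomic_eq_X_pow_sub_one hn, eval_sub,
            eval_pow, eval_X, eval_one]
      _ = ((a ^ n - b ^ n : ℤ) : ℝ) := by
          push_cast; rw [div_pow]; field_simp
  exact_mod_cast key

lemma zsigPhi_pos (n : ℕ) : 0 < zsigPhi n a b := by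
  obtain ⟨h1, h0, hne, hq⟩ := zsigPhi_bR hb hba
  have : (0:ℝ) < ((zsigPhi n a b : ℤ) : ℝ) := by
    rw [zsigPhi_cast n a b hne]
    exact mul_pos (pow_pos h0 _) (cyclotomic_pos' n hq)
  exact_mod_cast this

lemma zsigPhi_one : zsigPhi 1 a b = a - b := by
  obtain ⟨h1, h0, hne, hq⟩ := zsigPhi_bR hb hba
  have : ((zsigPhi 1 a b : ℤ) : ℝ) = ((a - b : ℤ) : ℝ) := by
    rw [zsigPhi_cast 1 a b hne, cyclotomic_one, Nat.totient_one]
    push_cast; simp only [eval_sub, eval_X, eval_one]; field_simp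
  exact_mod_cast this

lemma zsigPhi_two : zsigPhi 2 a b = a + b := by
  obtain ⟨h1, h0, hne, hq⟩ := zsigPhi_bR hb hba
  have : ((zsigPhi 2 a b : ℤ) : ℝ) = ((a + b : ℤ) : ℝ) := by
    rw [zsigPhi_cast 2 a b hne, cyclotomic_two, Nat.totient_two]
    push_cast; simp only [eval_add, eval_X, eval_one]; field_simp
  exact_mod_cast this

lemma zsigPhi_lb (n : ℕ) : (a - b) ^ n.totient ≤ zsigPhi n a b := by
  obtain ⟨h1, h0, hne, hq⟩ := zsigPhi_bR hb hba
  have : (((a - b) ^ n.totient : ℤ) : ℝ) ≤ ((zsigPhi n a b : ℤ) : ℝ) := by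
    rw [zsigPhi_cast n a b hne]
    have := sub_one_pow_totient_le_cyclotomic_eval hq n
    calc (((a - b) ^ n.totient : ℤ) : ℝ) = ((b:ℝ) * ((a:ℝ)/(b:ℝ) - 1)) ^ n.totient := by
          push_cast; field_simp
      _ = (b:ℝ) ^ n.totient * ((a:ℝ)/(b:ℝ) - 1) ^ n.totient := mul_pow _ _ _
      _ ≤ _ := by
          apply mul_le_mul_of_nonneg_left this (le_of_lt (pow_pos h0 _))
  exact_mod_cast this

lemma zsigPhi_gt_one {n : ℕ} (hn : 2 ≤ n) : 1 < zsigPhi n a b := by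
  obtain ⟨h1, h0, hne, hq⟩ := zsigPhi_bR hb hba
  have : (1:ℝ) < ((zsigPhi n a b : ℤ) : ℝ) := by
    rw [zsigPhi_cast n a b hne]
    have hlt := sub_one_pow_totient_lt_cyclotomic_eval hn hq
    have hab1 : (1:ℝ) ≤ ((a:ℝ) - b) := by
      have : b + 1 ≤ a := hba
      have : (b:ℝ) + 1 ≤ (a:ℝ) := by exact_mod_cast this
      linarith
    calc (1:ℝ) ≤ ((a:ℝ) - b) ^ n.totient := one_le_pow₀ hab1
      _ = ((b:ℝ) * ((a:ℝ)/(b:ℝ) - 1)) ^ n.totient := by field_simp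
      _ = (b:ℝ) ^ n.totient * ((a:ℝ)/(b:ℝ) - 1) ^ n.totient := mul_pow _ _ _
      _ < _ := by
          apply mul_lt_mul_of_pos_left hlt (pow_pos h0 _)
  exact_mod_cast this

lemma zsigPhi_ub (n : ℕ) : zsigPhi n a b ≤ (a + b) ^ n.totient := by
  obtain ⟨h1, h0, hne, hq⟩ := zsigPhi_bR hb hba
  have : ((zsigPhi n a b : ℤ) : ℝ) ≤ (((a + b) ^ n.totient : ℤ) : ℝ) := by
    rw [zsigPhi_cast n a b hne]
    have := cyclotomic_eval_le_add_one_pow_totient hq n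
    calc (b:ℝ) ^ n.totient * (cyclotomic n ℝ).eval ((a:ℝ)/(b:ℝ))
        ≤ (b:ℝ) ^ n.totient * ((a:ℝ)/(b:ℝ) + 1) ^ n.totient :=
          mul_le_mul_of_nonneg_left this (le_of_lt (pow_pos h0 _))
      _ = ((b:ℝ) * ((a:ℝ)/(b:ℝ) + 1)) ^ n.totient := (mul_pow _ _ _).symm
      _ = (((a + b : ℤ) : ℝ)) ^ n.totient := by push_cast; field_simp
      _ = (((a + b) ^ n.totient : ℤ) : ℝ) := by push_cast; ring
  exact_mod_cast this

end

section
variable {a b : ℤ}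

lemma zsigPhi_step {p k : ℕ} (hp : p.Prime) (hpk : p ∣ k) (hb : (b:ℝ) ≠ 0) :
    zsigPhi (p * k) a b = zsigPhi k (a ^ p) (b ^ p) := by
  have hbp : ((b ^ p : ℤ) : ℝ) ≠ 0 := by push_cast; exact pow_ne_zero _ hb
  have key : ((zsigPhi (p * k) a b : ℤ) : ℝ) = ((zsigPhi k (a ^ p) (b ^ p) : ℤ) : ℝ) := by
    rw [zsigPhi_cast _ a b hb, zsigPhi_cast _ (a^p) (b^p) hbp]
    have hcyc : cyclotomic (p * k) ℝ = expand ℝ p (cyclotomic k ℝ) := by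
      rw [cyclotomic_expand_eq_cyclotomic hp hpk, mul_comm]
    rw [hcyc, expand_eval, Nat.totient_mul_of_prime_of_dvd hp hpk]
    push_cast
    rw [div_pow, pow_mul]
  exact_mod_cast key

lemma zsigPhi_ratio {p k : ℕ} (hp : p.Prime) (hpk : ¬ p ∣ k) (hb : (b:ℝ) ≠ 0) :
    zsigPhi (p * k) a b * zsigPhi k a b = zsigPhi k (a ^ p) (b ^ p) := by
  have hbp : ((b ^ p : ℤ) : ℝ) ≠ 0 := by push_cast; exact pow_ne_zero _ hb
  have key : ((zsigPhi (p * k) a b * zsigPhi k a b : ℤ) : ℝ)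
      = ((zsigPhi k (a ^ p) (b ^ p) : ℤ) : ℝ) := by
    rw [Int.cast_mul, zsigPhi_cast _ a b hb, zsigPhi_cast _ a b hb,
      zsigPhi_cast _ (a^p) (b^p) hbp]
    have hcyc : expand ℝ p (cyclotomic k ℝ) = cyclotomic (k * p) ℝ * cyclotomic k ℝ :=
      cyclotomic_expand_eq_cyclotomic_mul hp hpk ℝ
    have he : (cyclotomic k ℝ).eval (((a:ℝ)/(b:ℝ)) ^ p)
        = (cyclotomic (k*p) ℝ).eval ((a:ℝ)/(b:ℝ)) * (cyclotomic k ℝ).eval ((a:ℝ)/(b:ℝ)) := by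
      rw [← expand_eval, hcyc, eval_mul]
    have htot : (p * k).totient = (p - 1) * k.totient :=
      Nat.totient_mul_of_prime_of_not_dvd hp hpk
    have hp1 : 1 ≤ p := hp.one_lt.le.trans' (by norm_num)
    push_cast
    rw [show ((a:ℝ)^p/(b:ℝ)^p) = ((a:ℝ)/(b:ℝ))^p from (div_pow _ _ _).symm, ← pow_mul, he, htot,
      mul_comm k p]
    have hexp : (b:ℝ) ^ (p * k.totient) = (b:ℝ) ^ ((p-1) * k.totient) * (b:ℝ) ^ k.totient := by
      rw [← pow_add]
      congr 1
      have := Nat.succ_pred_eq_of_pos hp.pos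
      nlinarith [Nat.sub_add_cancel hp.one_le]
    rw [hexp]; ring
  exact_mod_cast key

lemma zsigPhi_iter {p m : ℕ} (hp : p.Prime) {j : ℕ} (hj : 1 ≤ j) :
    ∀ a b : ℤ, (b:ℝ) ≠ 0 →
      zsigPhi (p ^ j * m) a b = zsigPhi (p * m) (a ^ p ^ (j - 1)) (b ^ p ^ (j - 1)) := by
  induction j with
  | zero => omega
  | succ j ih =>
    intro a b hb
    rcases Nat.eq_or_lt_of_le hj with h1 | h2
    · simp [← h1]
    · have hj1 : 1 ≤ j := by omega
      have hstep : zsigPhi (p ^ (j+1) * m) a b = zsigPhi (p ^ j * m) (a ^ p) (b ^ p) := by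
        have hh : p ^ (j+1) * m = p * (p ^ j * m) := by ring
        rw [hh, zsigPhi_step hp (Dvd.dvd.mul_right (dvd_pow_self p (by omega)) m) hb]
      rw [hstep, ih hj1 (a ^ p) (b ^ p) (by push_cast; exact pow_ne_zero _ hb)]
      rw [← pow_mul, ← pow_mul]
      congr 2 <;> [skip; skip] <;>
        · rw [← pow_succ']
          congr 1
          omega

end

lemma zsigPhi_size {a b : ℤ} (hb : 1 ≤ b) (hba : b < a) {l m j : ℕ} (hl : l.Prime)
    (hm : 1 ≤ m) (hlm : ¬ l ∣ m) (hj : 1 ≤ j) :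
    (a ^ l ^ (j-1)) ^ (l - 2) ≤ zsigPhi (l ^ j * m) a b := by
  set A : ℤ := a ^ l ^ (j-1) with hA
  set B : ℤ := b ^ l ^ (j-1) with hBdef
  have hb0 : (0:ℤ) < b := lt_of_lt_of_le one_pos hb
  have hB : 1 ≤ B := one_le_pow₀ hb
  have hexppos : l ^ (j-1) ≠ 0 := pow_ne_zero _ hl.pos.ne'
  have hAB : B < A := pow_lt_pow_left₀ hba (le_of_lt hb0) hexppos
  have hA1 : 1 ≤ A := le_of_lt (lt_of_le_of_lt hB hAB)
  have hBR : ((B:ℤ):ℝ) ≠ 0 := by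
    have : (0:ℤ) < B := lt_of_lt_of_le one_pos hB
    exact_mod_cast this.ne'
  have hBl : 1 ≤ B ^ l := one_le_pow₀ hB
  have hABl : B ^ l < A ^ l := pow_lt_pow_left₀ hAB (by linarith) hl.pos.ne'
  have htot : 1 ≤ m.totient := (Nat.totient_pos).mpr hm
  have hl2 := hl.two_le
  -- key integer inequality
  have hkey : A ^ (l - 2) * (A + B) ≤ A ^ l - B ^ l := by
    have h1 : B ^ l ≤ A ^ (l-2) * B ^ 2 := by
      have : B ^ l = B ^ (l-2) * B ^ 2 := by
        rw [← pow_add]; congr 1; omega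
      rw [this]
      apply mul_le_mul_of_nonneg_right (pow_le_pow_left₀ (by linarith) (le_of_lt hAB) _)
        (by positivity)
    have h2 : A ^ l = A ^ (l-2) * A ^ 2 := by
      rw [← pow_add]; congr 1; have := hl.two_le; omega
    have h3 : A ^ (l-2) * (A^2 - B^2) = A ^ (l-2) * ((A - B) * (A + B)) := by ring
    have hABge : 1 ≤ A - B := by linarith
    nlinarith [pow_nonneg (by linarith : (0:ℤ) ≤ A) (l-2), pow_pos hb0 (l ^ (j-1))]
  -- chain
  have h1 : zsigPhi (l*m) A B * zsigPhi m A B = zsigPhi m (A^l) (B^l) :=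
    zsigPhi_ratio hl hlm hBR
  have h2 : (A^l - B^l) ^ m.totient ≤ zsigPhi m (A^l) (B^l) := by
    have := zsigPhi_lb hBl hABl m
    exact this
  have h3 : zsigPhi m A B ≤ (A+B) ^ m.totient := zsigPhi_ub hB hAB m
  have hP : 0 < zsigPhi m A B := zsigPhi_pos hB hAB m
  have h4 : (A ^ (l-2)) ^ m.totient * (A+B) ^ m.totient ≤ (A^l - B^l) ^ m.totient := by
    rw [← mul_pow]
    apply pow_le_pow_left₀ _ hkey
    positivity
  have h5 : A ^ (l-2) * zsigPhi m A B ≤ (A ^ (l-2)) ^ m.totient * (A+B) ^ m.totient := by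
    apply mul_le_mul
    · calc A ^ (l-2) = (A ^ (l-2)) ^ 1 := (pow_one _).symm
        _ ≤ (A ^ (l-2)) ^ m.totient := pow_le_pow_right₀ (one_le_pow₀ hA1) htot
    · exact h3
    · exact le_of_lt hP
    · positivity
  have hfinal : A ^ (l-2) * zsigPhi m A B ≤ zsigPhi (l*m) A B * zsigPhi m A B := by
    rw [h1]; exact le_trans h5 (le_trans h4 h2)
  have hle : A ^ (l-2) ≤ zsigPhi (l*m) A B := le_of_mul_le_mul_right hfinal hP
  rwa [zsigPhi_iter hl hj a b (by exact_mod_cast hb0.ne')]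

lemma zsig_order {a b : ℤ} (hab : IsCoprime a b) {n : ℕ} (hn : 0 < n) {q : ℕ} (hq : q.Prime)
    (hqdvd : (q:ℤ) ∣ a ^ n - b ^ n) :
    ∃ m : ℕ, 1 ≤ m ∧ m ∣ q - 1 ∧ m ∣ n ∧ (∀ k : ℕ, ((q:ℤ) ∣ a ^ k - b ^ k ↔ m ∣ k)) ∧
      ¬ (q:ℤ) ∣ a ∧ ¬ (q:ℤ) ∣ b ∧
      ((q:ℤ) ∣ zsigPhi n a b → ¬ q ∣ n → m = n) := by
  haveI : Fact q.Prime := ⟨hq⟩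
  have hqZ : Prime (q:ℤ) := Nat.prime_iff_prime_int.mp hq
  have hqu : ¬ IsUnit (q:ℤ) := hqZ.not_unit
  -- q divides neither a nor b
  have hqa : ¬ (q:ℤ) ∣ a := by
    intro h
    have hbn : (q:ℤ) ∣ b ^ n := by
      have han : (q:ℤ) ∣ a ^ n := dvd_pow h hn.ne'
      have := dvd_sub han hqdvd
      simpa using this
    exact hqu (hab.isUnit_of_dvd' h (hqZ.dvd_of_dvd_pow hbn))
  have hqb : ¬ (q:ℤ) ∣ b := by
    intro h
    have han : (q:ℤ) ∣ a ^ n := by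
      have hbn : (q:ℤ) ∣ b ^ n := dvd_pow h hn.ne'
      have := dvd_add hqdvd hbn
      simpa using this
    exact hqu (hab.isUnit_of_dvd' (hqZ.dvd_of_dvd_pow han) h)
  set α : ZMod q := (a : ZMod q) with hα
  set β : ZMod q := (b : ZMod q) with hβ
  have hαz : α ≠ 0 := by
    rw [hα, Ne, ZMod.intCast_zmod_eq_zero_iff_dvd]; exact hqa
  have hβz : β ≠ 0 := by
    rw [hβ, Ne, ZMod.intCast_zmod_eq_zero_iff_dvd]; exact hqb
  set γ : ZMod q := α * β⁻¹ with hγdef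
  have hγz : γ ≠ 0 := mul_ne_zero hαz (inv_ne_zero hβz)
  have hfermat : γ ^ (q - 1) = 1 := ZMod.pow_card_sub_one_eq_one hγz
  have hfin : IsOfFinOrder γ :=
    isOfFinOrder_iff_pow_eq_one.mpr ⟨q - 1, by have := hq.two_le; omega, hfermat⟩
  set m := orderOf γ with hm
  have hm1 : 1 ≤ m := orderOf_pos_iff.mpr hfin
  have hmq : m ∣ q - 1 := orderOf_dvd_of_pow_eq_one hfermat
  have hiff : ∀ k : ℕ, ((q:ℤ) ∣ a ^ k - b ^ k ↔ m ∣ k) := by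
    intro k
    have hβk : β ^ k ≠ 0 := pow_ne_zero _ hβz
    have h1 : (q:ℤ) ∣ a ^ k - b ^ k ↔ α ^ k = β ^ k := by
      rw [← ZMod.intCast_zmod_eq_zero_iff_dvd]
      push_cast
      rw [sub_eq_zero, hα, hβ]
    have h2 : α ^ k = β ^ k ↔ γ ^ k = 1 := by
      rw [hγdef, mul_pow, inv_pow]
      constructor
      · intro h; rw [h, mul_inv_cancel₀ hβk]
      · intro h
        have := congrArg (· * β ^ k) h
        simpa [mul_assoc, inv_mul_cancel₀ hβk] using this
    rw [h1, h2, ← orderOf_dvd_iff_pow_eq_one]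
  refine ⟨m, hm1, hmq, (hiff n).mp hqdvd, hiff, hqa, hqb, ?_⟩
  intro hqPhi hqn
  haveI : NeZero ((n : ZMod q)) := ⟨by
    rw [Ne, ZMod.natCast_eq_zero_iff]; exact hqn⟩
  have hzero : ((zsigPhi n a b : ℤ) : ZMod q) = 0 := by
    rwa [ZMod.intCast_zmod_eq_zero_iff_dvd]
  rw [zsigPhi_cast n a b hβz] at hzero
  have heval : (cyclotomic n (ZMod q)).eval ((a : ZMod q) / (b : ZMod q)) = 0 := by
    rcases mul_eq_zero.mp hzero with h | h
    · exact absurd h (pow_ne_zero _ hβz)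
    · exact h
  have hroot : IsRoot (cyclotomic n (ZMod q)) γ := by
    rw [hγdef, ← div_eq_mul_inv]
    exact heval
  have hprim : IsPrimitiveRoot γ n := (isRoot_cyclotomic_iff).mp hroot
  exact (hprim.eq_orderOf).symm

lemma zsig_dvd_geom {a b : ℤ} (hb : 1 ≤ b) (hba : b < a) {n r : ℕ} (hn : 0 < n)
    (hr : r.Prime) (hrn : r ∣ n) :
    zsigPhi n a b ∣ ∑ i ∈ Finset.range r, (a ^ (n/r)) ^ i * (b ^ (n/r)) ^ (r - 1 - i) := by
  set s := n / r with hsdef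
  have hs : s * r = n := Nat.div_mul_cancel hrn
  have hs1 : 0 < s := Nat.div_pos (Nat.le_of_dvd hn hrn) hr.pos
  have hsn : s < n := by
    calc s = s * 1 := (mul_one s).symm
      _ < s * r := Nat.mul_lt_mul_of_le_of_lt (le_refl s) hr.one_lt hs1
      _ = n := hs
  have hb0 : (0:ℤ) ≤ b := by linarith
  have hABlt : b ^ s - a ^ s < 0 := by
    have := pow_lt_pow_left₀ hba hb0 hs1.ne'
    linarith
  have hABne : a ^ s - b ^ s ≠ 0 := by
    intro h
    rw [sub_eq_zero] at h
    rw [h] at hABlt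
    simp at hABlt
  have hgeom : (∑ i ∈ Finset.range r, (a^s)^i * (b^s)^(r-1-i)) * (a^s - b^s) = a^n - b^n := by
    rw [geom_sum₂_mul, ← pow_mul, ← pow_mul, hs]
  have hsubset : insert n s.divisors ⊆ n.divisors := by
    intro d hd
    rcases Finset.mem_insert.mp hd with h | h
    · rw [h]; exact Nat.mem_divisors_self n hn.ne'
    · exact Nat.divisors_subset_of_dvd hn.ne' ⟨r, hs.symm⟩ h
  have hnotmem : n ∉ s.divisors := by
    intro h
    have := Nat.le_of_dvd hs1 (Nat.mem_divisors.mp h).1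
    omega
  have hdvd : zsigPhi n a b * (a^s - b^s) ∣ a^n - b^n := by
    rw [← zsigPhi_prod hb hba hs1, ← zsigPhi_prod hb hba hn,
      ← Finset.prod_insert (f := fun d => zsigPhi d a b) hnotmem]
    exact Finset.prod_dvd_prod_of_subset _ _ _ hsubset
  rw [← hgeom] at hdvd
  exact (mul_dvd_mul_iff_right hABne).mp hdvd

lemma zsigPhi_dvd_pow_sub_pow {a b : ℤ} (hb : 1 ≤ b) (hba : b < a) {n : ℕ} (hn : 0 < n) :
    zsigPhi n a b ∣ a ^ n - b ^ n := by
  rw [← zsigPhi_prod hb hba hn]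
  exact Finset.dvd_prod_of_mem _ (Nat.mem_divisors_self n hn.ne')

lemma zsig_key {a b : ℤ} (hb : 1 ≤ b) (hba : b < a) (hab : IsCoprime a b) {n : ℕ} (hn : 0 < n)
    {q : ℕ} (hq : q.Prime) (hqC : (q:ℤ) ∣ zsigPhi n a b)
    (hex : ∃ k, 1 ≤ k ∧ k < n ∧ (q:ℤ) ∣ a ^ k - b ^ k) :
    ∃ m j : ℕ, n = q ^ j * m ∧ 1 ≤ j ∧ 1 ≤ m ∧ m ∣ q - 1 ∧
      (∀ k : ℕ, ((q:ℤ) ∣ a ^ k - b ^ k ↔ m ∣ k)) ∧ ¬ (q:ℤ) ∣ a ∧ ¬ (q:ℤ) ∣ b := by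
  have hqab : (q:ℤ) ∣ a ^ n - b ^ n := hqC.trans (zsigPhi_dvd_pow_sub_pow hb hba hn)
  obtain ⟨m, hm1, hmq, hmn, hiff, hqa, hqb, hlast⟩ := zsig_order hab hn hq hqab
  obtain ⟨k, hk1, hkn, hkd⟩ := hex
  have hmk : m ∣ k := (hiff k).mp hkd
  have hmlt : m < n := lt_of_le_of_lt (Nat.le_of_dvd (by omega) hmk) hkn
  have hβq : ((b : ZMod q)) ≠ 0 := by
    haveI : Fact q.Prime := ⟨hq⟩
    rw [Ne, ZMod.intCast_zmod_eq_zero_iff_dvd]; exact hqb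
  have hR : ∀ r : ℕ, r.Prime → r ∣ n / m → r = q := by
    intro r hr hrnm
    by_contra hne
    haveI : Fact q.Prime := ⟨hq⟩
    have hrn : r ∣ n := hrnm.trans (Nat.div_dvd_of_dvd hmn)
    have hms : m ∣ n / r := by
      obtain ⟨c, hc⟩ := hrnm
      have hn' : n = r * (m * c) := by
        calc n = m * (n / m) := (Nat.mul_div_cancel' hmn).symm
          _ = m * (r * c) := by rw [hc]
          _ = r * (m * c) := by ring
      refine ⟨c, ?_⟩
      rw [hn', Nat.mul_div_cancel_left _ hr.pos]
    set s := n / r with hsdef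
    have hst : (q:ℤ) ∣ a ^ s - b ^ s := (hiff s).mpr hms
    have hαβ : ((a : ZMod q)) ^ s = ((b : ZMod q)) ^ s := by
      have h0 : ((a^s - b^s : ℤ) : ZMod q) = 0 := by
        rwa [ZMod.intCast_zmod_eq_zero_iff_dvd]
      push_cast at h0
      rwa [sub_eq_zero] at h0
    have hqQ : (q:ℤ) ∣ ∑ i ∈ Finset.range r, (a ^ s) ^ i * (b ^ s) ^ (r - 1 - i) :=
      hqC.trans (zsig_dvd_geom hb hba hn hr hrn)
    have hQ0 : ((∑ i ∈ Finset.range r, (a ^ s) ^ i * (b ^ s) ^ (r - 1 - i) : ℤ) : ZMod q) = 0 := by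
      rwa [ZMod.intCast_zmod_eq_zero_iff_dvd]
    push_cast at hQ0
    have hterm : ∀ i ∈ Finset.range r,
        ((a : ZMod q) ^ s) ^ i * ((b : ZMod q) ^ s) ^ (r-1-i)
          = ((b : ZMod q) ^ s) ^ (r-1) := by
      intro i hi
      rw [Finset.mem_range] at hi
      rw [hαβ, ← pow_add]
      congr 1
      omega
    rw [Finset.sum_congr rfl hterm, Finset.sum_const, Finset.card_range, nsmul_eq_mul] at hQ0
    have hβs : ((b : ZMod q) ^ s) ^ (r-1) ≠ 0 := pow_ne_zero _ (pow_ne_zero _ hβq)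
    have hr0 : (r : ZMod q) = 0 := by
      rcases mul_eq_zero.mp hQ0 with h | h
      · exact h
      · exact absurd h hβs
    have hqr : q ∣ r := (ZMod.natCast_eq_zero_iff r q).mp hr0
    exact hne ((Nat.prime_dvd_prime_iff_eq hq hr).mp hqr).symm
  have hnm1 : n / m ≠ 1 := by
    intro h
    have := Nat.mul_div_cancel' hmn
    rw [h, mul_one] at this
    omega
  have hnm0 : n / m ≠ 0 := by
    have := Nat.div_pos (Nat.le_of_dvd hn hmn) (by omega)
    omega
  have hpow := Nat.eq_prime_pow_of_unique_prime_dvd hnm0 (fun {d} hd hdvd => hR d hd hdvd)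
  set j := (n / m).primeFactorsList.length with hjdef
  have hj1 : 1 ≤ j := by
    by_contra h
    push_neg at h
    interval_cases j
    · rw [pow_zero] at hpow
      exact hnm1 hpow
  refine ⟨m, j, ?_, hj1, hm1, hmq, hiff, hqa, hqb⟩
  calc n = m * (n / m) := (Nat.mul_div_cancel' hmn).symm
    _ = m * q ^ j := by rw [hpow]
    _ = q ^ j * m := mul_comm _ _

lemma zsig_binom {B t : ℤ} {l : ℕ} :
    ∀ i : ℕ, (l:ℤ)^2 ∣ (B + l*t)^i - B^i - i*(l*t)*B^(i-1) := by
  intro i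
  induction i with
  | zero => simp
  | succ i ih =>
    rcases Nat.eq_zero_or_pos i with h0 | hpos
    · subst h0
      simp
    · obtain ⟨c, hc⟩ := ih
      have hB : B^(i-1) * B = B^i := by
        rw [← pow_succ]
        congr 1
        omega
      refine ⟨c * B + (l:ℤ)*t*c + i*t^2*B^(i-1), ?_⟩
      have hsucc : (B + l*t)^(i+1) = (B + l*t)^i * (B + l*t) := pow_succ _ _
      have hexp : (B + l*t)^i = B^i + i*(l*t)*B^(i-1) + (l:ℤ)^2*c := by linarith [hc]
      rw [hsucc, hexp]
      push_cast
      linear_combination ((i:ℤ) * l * t) * hB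

lemma zsig_sq {A B t : ℤ} {l : ℕ} (hl : l.Prime) (hodd : Odd l) (hA : A = B + l*t)
    (hlb : ¬ (l:ℤ) ∣ B) : ¬ ((l:ℤ)^2 ∣ ∑ i ∈ Finset.range l, A^i * B^(l-1-i)) := by
  intro hdvd
  have hl2 := hl.two_le
  obtain ⟨w, hw⟩ : ∃ w, l - 1 = 2 * w := by
    obtain ⟨u, hu⟩ := hodd
    exact ⟨u, by omega⟩
  have hsumid : (∑ i ∈ Finset.range l, (i:ℤ)) = l * w := by
    have h2 := Finset.sum_range_id_mul_two l
    rw [hw] at h2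
    have h2' : (∑ i ∈ Finset.range l, i) * 2 = (l * w) * 2 := by rw [h2]; ring
    have hSS := Nat.eq_of_mul_eq_mul_right (by norm_num) h2'
    calc (∑ i ∈ Finset.range l, (i:ℤ)) = ((∑ i ∈ Finset.range l, i : ℕ) : ℤ) := by push_cast; rfl
      _ = ((l*w : ℕ) : ℤ) := by rw [hSS]
      _ = (l:ℤ)*w := by push_cast; ring
  have hdiff : (l:ℤ)^2 ∣ (∑ i ∈ Finset.range l, A^i * B^(l-1-i))
      - ((l:ℤ) * B^(l-1) + (l:ℤ)*t*B^(l-2)*((l:ℤ)*w)) := by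
    have heq : (∑ i ∈ Finset.range l, A^i * B^(l-1-i))
        - ((l:ℤ) * B^(l-1) + (l:ℤ)*t*B^(l-2)*((l:ℤ)*w))
        = ∑ i ∈ Finset.range l, (A^i * B^(l-1-i) - (B^(l-1) + i*((l:ℤ)*t)*B^(l-2))) := by
      rw [Finset.sum_sub_distrib]
      congr 1
      rw [Finset.sum_add_distrib, Finset.sum_const, Finset.card_range, nsmul_eq_mul]
      congr 1
      symm
      calc ∑ i ∈ Finset.range l, (i:ℤ)*((l:ℤ)*t)*B^(l-2)
          = (∑ i ∈ Finset.range l, (i:ℤ)) * (((l:ℤ)*t)*B^(l-2)) := by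
            rw [Finset.sum_mul]
            exact Finset.sum_congr rfl fun i _ => by ring
        _ = (l:ℤ)*t*B^(l-2)*((l:ℤ)*w) := by rw [hsumid]; ring
    rw [heq]
    apply Finset.dvd_sum
    intro i hi
    rw [Finset.mem_range] at hi
    have hbin := zsig_binom (B := B) (t := t) (l := l) i
    rw [← hA] at hbin
    obtain ⟨c, hc⟩ := hbin
    have hAi : A^i = B^i + i*((l:ℤ)*t)*B^(i-1) + (l:ℤ)^2*c := by linarith
    rw [hAi]
    rcases Nat.eq_zero_or_pos i with h0 | hpos
    · subst h0
      refine ⟨c * B^(l-1-0), ?_⟩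
      have : B^0 * B^(l-1-0) = B^(l-1) := by
        rw [← pow_add]
        congr 1
        omega
      push_cast
      linear_combination this
    · have e1 : B^i * B^(l-1-i) = B^(l-1) := by
        rw [← pow_add]; congr 1; omega
      have e2 : B^(i-1) * B^(l-1-i) = B^(l-2) := by
        rw [← pow_add]; congr 1; omega
      refine ⟨c * B^(l-1-i), ?_⟩
      linear_combination e1 + ((i:ℤ)*(l:ℤ)*t) * e2
  have hX : (l:ℤ)^2 ∣ (l:ℤ) * B^(l-1) + (l:ℤ)*t*B^(l-2)*((l:ℤ)*w) := by
    have := dvd_sub hdvd hdiff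
    simpa using this
  have h3 : (l:ℤ)^2 ∣ (l:ℤ) * B^(l-1) := by
    have hsecond : (l:ℤ)^2 ∣ (l:ℤ)*t*B^(l-2)*((l:ℤ)*w) := ⟨t*B^(l-2)*w, by ring⟩
    have := dvd_sub hX hsecond
    simpa using this
  have hl0 : (l:ℤ) ≠ 0 := by
    have := hl.pos
    exact_mod_cast this.ne'
  have h4 : (l:ℤ) ∣ B^(l-1) := by
    obtain ⟨c, hc⟩ := h3
    refine ⟨c, mul_left_cancel₀ hl0 ?_⟩
    rw [hc]; ring
  exact hlb ((Nat.prime_iff_prime_int.mp hl).dvd_of_dvd_pow h4)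

lemma zsig_lt_two_pow {l : ℕ} (h5 : 5 ≤ l) : l < 2 ^ (l - 2) := by
  induction l, h5 using Nat.le_induction with
  | base => norm_num
  | succ l hl ih =>
    have h1 : l + 1 - 2 = (l - 2) + 1 := by omega
    rw [h1, pow_succ]
    omega

lemma zsig_odd_sq_mod_four {x : ℤ} (hx : ¬ (2:ℤ) ∣ x) : (4:ℤ) ∣ x^2 - 1 := by
  obtain ⟨s, hs⟩ : ∃ s, x = 2*s + 1 := ⟨x / 2, by omega⟩
  exact ⟨s^2 + s, by rw [hs]; ring⟩

/-- Zsigmondy–Bang theorem: for coprime integers `a > b ≥ 1` and `n > 6`, there is a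
prime dividing `a^n − b^n` that divides no `a^k − b^k` with `1 ≤ k < n`. -/
theorem zsigmondy_bang (a b : ℤ) (hba : b < a) (hb : 1 ≤ b) (hab : IsCoprime a b)
    (n : ℕ) (hn : 6 < n) :
    ∃ p : ℕ, p.Prime ∧ (p : ℤ) ∣ a ^ n - b ^ n ∧
      ∀ k : ℕ, 1 ≤ k → k < n → ¬ (p : ℤ) ∣ a ^ k - b ^ k := by
  by_contra hcon
  push_neg at hcon
  have hn0 : 0 < n := by omega
  have ha2 : 2 ≤ a := by omega
  set C := zsigPhi n a b with hCdef
  have hC1 : 1 < C := zsigPhi_gt_one hb hba (by omega)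
  have hCd : C ∣ a ^ n - b ^ n := zsigPhi_dvd_pow_sub_pow hb hba hn0
  have hCnat : C.natAbs ≠ 1 := by omega
  set l := C.natAbs.minFac with hldef
  have hlp : l.Prime := Nat.minFac_prime hCnat
  have hlC : (l:ℤ) ∣ C := Int.natCast_dvd.mpr (Nat.minFac_dvd _)
  clear_value l
  obtain ⟨m, j, hnfac, hj1, hm1, hmq, hiff, hla, hlb⟩ :=
    zsig_key hb hba hab hn0 hlp hlC (hcon l hlp (hlC.trans hCd))
  have hml : m < l := by
    have := Nat.le_of_dvd (by have := hlp.two_le; omega) hmq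
    have := hlp.two_le
    omega
  -- all prime divisors of C are l
  have huniq : ∀ {d : ℕ}, d.Prime → d ∣ C.natAbs → d = l := by
    intro r hr hrC
    by_contra hne
    have hrCz : (r:ℤ) ∣ C := Int.natCast_dvd.mpr hrC
    obtain ⟨m', j', hnfac', hj1', hm1', hmq', hiff', hra, hrb⟩ :=
      zsig_key hb hba hab hn0 hr hrCz (hcon r hr (hrCz.trans hCd))
    have hm'r : m' < r := by
      have := Nat.le_of_dvd (by have := hr.two_le; omega) hmq'
      have := hr.two_le
      omega
    have hrn : r ∣ n := by
      rw [hnfac']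
      exact Dvd.dvd.mul_right (dvd_pow_self r (by omega)) m'
    have hln : l ∣ n := by
      rw [hnfac]
      exact Dvd.dvd.mul_right (dvd_pow_self l (by omega)) m
    have hrm : r ∣ m := by
      rw [hnfac] at hrn
      rcases (Nat.Prime.dvd_mul hr).mp hrn with h | h
      · exact absurd ((Nat.prime_dvd_prime_iff_eq hr hlp).mp (hr.dvd_of_dvd_pow h)) hne
      · exact h
    have hlm' : l ∣ m' := by
      rw [hnfac'] at hln
      rcases (Nat.Prime.dvd_mul hlp).mp hln with h | h
      · exact absurd ((Nat.prime_dvd_prime_iff_eq hlp hr).mp (hlp.dvd_of_dvd_pow h)).symm hne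
      · exact h
    have h1 : r ≤ m := Nat.le_of_dvd (by omega) hrm
    have h2 : l ≤ m' := Nat.le_of_dvd (by omega) hlm'
    omega
  have hCnat0 : C.natAbs ≠ 0 := by omega
  have hCeq : C.natAbs = l ^ C.natAbs.primeFactorsList.length :=
    Nat.eq_prime_pow_of_unique_prime_dvd hCnat0 huniq
  set E := C.natAbs.primeFactorsList.length with hEdef
  have hE1 : 1 ≤ E := by
    rcases Nat.eq_zero_or_pos E with h0 | h; · rw [h0, pow_zero] at hCeq; omega
    · exact h
  have hCnonneg : ((C.natAbs : ℕ) : ℤ) = C := Int.natAbs_of_nonneg (by omega)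
  rcases eq_or_ne l 2 with h2 | hne2
  · -- l = 2 : n = 2^j, C = A + B ≡ 2 mod 4, but C is a power of 2 bigger than 4
    subst h2
    have hm1' : m = 1 := Nat.dvd_one.mp (by simpa using hmq)
    subst hm1'
    have hj3 : 3 ≤ j := by
      by_contra h
      push_neg at h
      have : 2 ^ j ≤ 2 ^ 2 := Nat.pow_le_pow_right (by norm_num) (by omega)
      rw [hnfac] at hn
      omega
    set A : ℤ := a ^ 2 ^ (j-1) with hAdef
    set B : ℤ := b ^ 2 ^ (j-1) with hBdef
    have hexp0 : (2:ℕ) ^ (j-1) ≠ 0 := pow_ne_zero _ (by norm_num)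
    have hB1 : 1 ≤ B := one_le_pow₀ hb
    have hABlt : B < A := pow_lt_pow_left₀ hba (by linarith) hexp0
    have hbR : ((b:ℤ):ℝ) ≠ 0 := by
      have : (0:ℤ) < b := by linarith
      exact_mod_cast this.ne'
    have hCA : C = A + B := by
      calc C = zsigPhi (2 ^ j * 1) a b := by rw [hCdef, ← hnfac]
        _ = zsigPhi (2 * 1) A B := zsigPhi_iter Nat.prime_two hj1 a b hbR
        _ = zsigPhi 2 A B := by norm_num
        _ = A + B := zsigPhi_two hB1 hABlt
    have hodd_a : ¬ (2:ℤ) ∣ a := by exact_mod_cast hla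
    have hodd_b : ¬ (2:ℤ) ∣ b := by exact_mod_cast hlb
    have hsq : ∀ x : ℤ, ¬ (2:ℤ) ∣ x → (4:ℤ) ∣ x ^ 2 ^ (j-1) - 1 := by
      intro x hx
      have hxe : x ^ 2 ^ (j-1) = (x ^ 2 ^ (j-2)) ^ 2 := by
        rw [← pow_mul]
        congr 1
        rw [← pow_succ]
        congr 1
        omega
      rw [hxe]
      apply zsig_odd_sq_mod_four
      intro h
      have hp2 := Nat.prime_iff_prime_int.mp Nat.prime_two
      have h0 : ((2:ℕ):ℤ) ∣ x ^ 2 ^ (j-2) := by exact_mod_cast h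
      exact hx (by exact_mod_cast hp2.dvd_of_dvd_pow h0)
    have h4A : (4:ℤ) ∣ A - 1 := hsq a hodd_a
    have h4B : (4:ℤ) ∣ B - 1 := hsq b hodd_b
    have hA16 : (16:ℤ) ≤ A := by
      calc (16:ℤ) = 2 ^ 4 := by norm_num
        _ ≤ 2 ^ 2 ^ (j-1) := by
            apply pow_le_pow_right₀ (by norm_num)
            calc 4 = 2 ^ 2 := by norm_num
              _ ≤ 2 ^ (j-1) := Nat.pow_le_pow_right (by norm_num) (by omega)
        _ ≤ A := by
            rw [hAdef]
            exact pow_le_pow_left₀ (by norm_num) (by omega) _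
    have hC4 : 4 < C := by rw [hCA]; linarith
    have hE3 : 3 ≤ E := by
      by_contra h
      push_neg at h
      have : C.natAbs ≤ 2 ^ 2 := by
        rw [hCeq]
        exact Nat.pow_le_pow_right (by norm_num) (by omega)
      omega
    have h4C : (4:ℤ) ∣ C := by
      have hnat : (4:ℕ) ∣ C.natAbs := by
        rw [hCeq]
        exact (show (4:ℕ) = 2^2 by norm_num) ▸ pow_dvd_pow 2 (by omega)
      have h' : ((4:ℕ):ℤ) ∣ (C.natAbs:ℤ) := Int.natCast_dvd_natCast.mpr hnat
      rw [hCnonneg] at h'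
      exact_mod_cast h'
    have : (4:ℤ) ∣ 2 := by
      have := dvd_sub (dvd_sub h4C h4A) h4B
      have he : C - (A - 1) - (B - 1) = 2 := by rw [hCA]; ring
      rwa [he] at this
    norm_num at this
  · -- l odd
    have hodd : Odd l := hlp.odd_of_ne_two hne2
    have hl3 : 3 ≤ l := by
      have := hlp.two_le
      omega
    have hln' : l ∣ n := by
      rw [hnfac]
      exact Dvd.dvd.mul_right (dvd_pow_self l (by omega)) m
    have hlnotm : ¬ l ∣ m := fun h => by
      have := Nat.le_of_dvd (by omega) h
      omega
    have hs : n / l = l ^ (j-1) * m := by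
      rw [hnfac]
      have hlj : l ^ j = l * l ^ (j-1) := by
        rw [← pow_succ']
        congr 1
        omega
      rw [hlj, mul_assoc, Nat.mul_div_cancel_left _ hlp.pos]
    have hms : m ∣ n / l := by
      rw [hs]
      exact dvd_mul_left m _
    obtain ⟨t, ht⟩ := (hiff (n/l)).mpr hms
    have hQdvd : C ∣ ∑ i ∈ Finset.range l, (a ^ (n/l)) ^ i * (b ^ (n/l)) ^ (l - 1 - i) :=
      zsig_dvd_geom hb hba hn0 hlp hln'
    have hlBnd : ¬ (l:ℤ) ∣ b ^ (n/l) := fun h =>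
      hlb ((Nat.prime_iff_prime_int.mp hlp).dvd_of_dvd_pow h)
    have hnotsq := zsig_sq hlp hodd (show a ^ (n/l) = b ^ (n/l) + (l:ℤ)*t by linarith) hlBnd
    have hE : E = 1 := by
      by_contra h
      have h2E : 2 ≤ E := by omega
      apply hnotsq
      refine dvd_trans ?_ hQdvd
      have hnat : l ^ 2 ∣ C.natAbs := by
        rw [hCeq]
        exact pow_dvd_pow l h2E
      have h' : ((l ^ 2 : ℕ):ℤ) ∣ (C.natAbs:ℤ) := Int.natCast_dvd_natCast.mpr hnat
      rw [hCnonneg] at h'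
      exact_mod_cast h'
    have hCl : C = (l:ℤ) := by
      rw [← hCnonneg, hCeq, hE, pow_one]
    have hsize : (a ^ l ^ (j-1)) ^ (l - 2) ≤ C := by
      rw [hCdef, hnfac]
      exact zsigPhi_size hb hba hlp hm1 hlnotm hj1
    rcases eq_or_lt_of_le hj1 with hj1' | hj2
    · -- j = 1
      have hjeq : j = 1 := hj1'.symm
      subst hjeq
      rcases eq_or_ne l 3 with h3 | hne3
      · subst h3
        have hm2 : m ≤ 2 := Nat.le_of_dvd (by norm_num) (by simpa using hmq)
        rw [hnfac] at hn
        omega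
      · have hl5 : 5 ≤ l := by
          have hne4 : l ≠ 4 := by
            intro h
            rw [h] at hlp
            norm_num at hlp
          omega
        have hpow : (l:ℤ) < 2 ^ (l - 2) := by exact_mod_cast zsig_lt_two_pow hl5
        have h2a : (2:ℤ) ^ (l-2) ≤ a ^ (l-2) := pow_le_pow_left₀ (by norm_num) ha2 _
        have : a ^ (l-2) ≤ (l:ℤ) := by
          calc a ^ (l-2) = (a ^ l ^ (1-1)) ^ (l-2) := by norm_num
            _ ≤ C := hsize
            _ = l := hCl
        linarith
    · -- j ≥ 2
      have hj2' : 2 ≤ j := hj2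
      have hlexp : l ≤ l ^ (j-1) := by
        calc l = l ^ 1 := (pow_one l).symm
          _ ≤ l ^ (j-1) := Nat.pow_le_pow_right hlp.pos (by omega)
      have h1 : (l:ℤ) < 2 ^ l := by exact_mod_cast Nat.lt_two_pow_self
      have h2 : (2:ℤ) ^ l ≤ 2 ^ l ^ (j-1) := pow_le_pow_right₀ (by norm_num) hlexp
      have h3 : (2:ℤ) ^ l ^ (j-1) ≤ a ^ l ^ (j-1) := pow_le_pow_left₀ (by norm_num) ha2 _
      have h4 : a ^ l ^ (j-1) ≤ (a ^ l ^ (j-1)) ^ (l-2) := by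
        have hA1 : 1 ≤ a ^ l ^ (j-1) := one_le_pow₀ (by omega)
        calc a ^ l ^ (j-1) = (a ^ l ^ (j-1)) ^ 1 := (pow_one _).symm
          _ ≤ (a ^ l ^ (j-1)) ^ (l-2) := pow_le_pow_right₀ hA1 (by omega)
      have h5 : (a ^ l ^ (j-1)) ^ (l-2) ≤ (l:ℤ) := hCl ▸ hsize
      linarith
end
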